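/- Let F : ℝⁿ → ℝ have nonempty closed convex minimizer set X* with minimal value F*, let F_γ : ℝⁿ → ℝ satisfy F_γ ≤ F pointwise, let ‖·‖₁ be a weighted Euclidean norm with weights Lᵢ > 0, and let κ̄ > 0, q̄ ∈ [1,2]. Suppose F_γ(x₀) − F* ≥ (κ̄/2^{q̄/2})‖x₀ − x̄₀‖₁^{q̄}, where x̄₀ is the ‖·‖₁-projection of x₀ onto X*. (i) If a point x_k and a number A_k > 0 satisfy F_γ(x_k) − F_γ(x̄₀) ≤ ‖x₀ − x̄₀‖₁²/(2A_k), then F_γ(x_k) − F* ≤ (1/(A_k κ̄^{2/q̄})) (F_γ(x₀) − F*)^{2/q̄}. (ii) If moreover F_γ(x₀) ≤ F(x₀), A_k ≥ k²/(4N²), α ∈ (0,1) and k ≥ √( 4N² (F(x₀) − F*)^{(2−q̄)/q̄} / (κ̄^{2/q̄} α) ), then F_γ(x_k) − F* ≤ α (F_γ(x₀) − F*). -/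

import Mathlib

noncomputable section

/-- `blockProj b i x` models `Uᵢ Uᵢᵀ x`: the vector of `ℝⁿ` keeping the coordinates of block
`i` (as given by the block assignment `b : Fin n → Fin N`) and zeroing the others. -/
def blockProj {n N : ℕ} (b : Fin n → Fin N) (i : Fin N) (x : EuclideanSpace ℝ (Fin n)) :
    EuclideanSpace ℝ (Fin n) :=
  (EuclideanSpace.equiv (Fin n) ℝ).symm (fun j => if b j = i then x j else 0)

/-- The squared weighted norm `‖x‖₁² = ∑ᵢ Lᵢ ‖Uᵢᵀ x‖²`. -/
def wnormSq {n N : ℕ} (b : Fin n → Fin N) (L : Fin N → ℝ)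
    (x : EuclideanSpace ℝ (Fin n)) : ℝ :=
  ∑ i : Fin N, L i * ‖blockProj b i x‖ ^ 2

/-- The weighted norm `‖x‖₁ = (∑ᵢ Lᵢ ‖Uᵢᵀ x‖²)^{1/2}`. -/
def wnorm {n N : ℕ} (b : Fin n → Fin N) (L : Fin N → ℝ)
    (x : EuclideanSpace ℝ (Fin n)) : ℝ :=
  Real.sqrt (wnormSq b L x)

/-- restart condition for the accelerated coordinate descent method.
`F` has nonempty closed convex minimizer set `X*` with minimal value `F*`, `F_γ ≤ F`,
growth at `x₀`: `F_γ(x₀) − F* ≥ (κ̄/2^{q̄/2})‖x₀ − x̄₀‖₁^{q̄}` (`x̄₀` being the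
`‖·‖₁`-projection of `x₀` onto `X*`).
(i) If `F_γ(x_k) − F_γ(x̄₀) ≤ ‖x₀ − x̄₀‖₁²/(2A_k)` with `A_k > 0`, then
`F_γ(x_k) − F* ≤ (1/(A_k κ̄^{2/q̄})) (F_γ(x₀) − F*)^{2/q̄}`.
(ii) If moreover `F_γ(x₀) ≤ F(x₀)`, `A_k ≥ k²/(4N²)`, `α ∈ (0,1)` and
`k ≥ √(4N²(F(x₀) − F*)^{(2−q̄)/q̄}/(κ̄^{2/q̄}α))`, then
`F_γ(x_k) − F* ≤ α(F_γ(x₀) − F*)`. -/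
theorem restart_condition_accelerated (n N : ℕ) (hN : 0 < N) (b : Fin n → Fin N)
    (L : Fin N → ℝ) (hL : ∀ i, 0 < L i)
    (F Fγ : EuclideanSpace ℝ (Fin n) → ℝ) (hle : ∀ x, Fγ x ≤ F x)
    (Xs : Set (EuclideanSpace ℝ (Fin n)))
    (hXsne : Xs.Nonempty) (hXscl : IsClosed Xs) (hXsconv : Convex ℝ Xs)
    (Fs : ℝ) (hmin : ∀ y, Fs ≤ F y) (hXs : Xs = {y | F y = Fs})
    (κbar qbar : ℝ) (hκ : 0 < κbar) (hq1 : 1 ≤ qbar) (hq2 : qbar ≤ 2)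
    (x₀ xbar₀ : EuclideanSpace ℝ (Fin n)) (hmem : xbar₀ ∈ Xs)
    (hproj : ∀ z ∈ Xs, wnorm b L (x₀ - xbar₀) ≤ wnorm b L (x₀ - z))
    (hgrowth₀ : κbar / 2 ^ (qbar / 2) * wnorm b L (x₀ - xbar₀) ^ qbar ≤ Fγ x₀ - Fs)
    (k : ℕ) (xk : EuclideanSpace ℝ (Fin n)) (Ak : ℝ) (hAk : 0 < Ak)
    (hrate : Fγ xk - Fγ xbar₀ ≤ wnormSq b L (x₀ - xbar₀) / (2 * Ak)) :
    (Fγ xk - Fs ≤ 1 / (Ak * κbar ^ (2 / qbar)) * (Fγ x₀ - Fs) ^ (2 / qbar))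
    ∧ (Fγ x₀ ≤ F x₀ → (k : ℝ) ^ 2 / (4 * (N : ℝ) ^ 2) ≤ Ak →
        ∀ α : ℝ, 0 < α → α < 1 →
          Real.sqrt (4 * (N : ℝ) ^ 2 * (F x₀ - Fs) ^ ((2 - qbar) / qbar)
              / (κbar ^ (2 / qbar) * α)) ≤ (k : ℝ) →
          Fγ xk - Fs ≤ α * (Fγ x₀ - Fs)) := by
  have hq0 : (0:ℝ) < qbar := lt_of_lt_of_le one_pos hq1
  have hqne : qbar ≠ 0 := ne_of_gt hq0
  set S := wnormSq b L (x₀ - xbar₀) with hSdef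
  have hS0 : 0 ≤ S :=
    Finset.sum_nonneg fun i _ => mul_nonneg (hL i).le (by positivity)
  set D := wnorm b L (x₀ - xbar₀) with hDdef
  have hD0 : 0 ≤ D := Real.sqrt_nonneg _
  have hDsq : D ^ 2 = S := Real.sq_sqrt hS0
  have hκp : (0:ℝ) < κbar ^ (2 / qbar) := Real.rpow_pos_of_pos hκ _
  have hc : (0:ℝ) < 2 ^ (qbar / 2) := Real.rpow_pos_of_pos two_pos _
  have hFxbar : F xbar₀ = Fs := by rw [hXs] at hmem; exact hmem
  have hFγxbar : Fγ xbar₀ ≤ Fs := hFxbar ▸ hle xbar₀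
  have hE0 : 0 ≤ Fγ x₀ - Fs :=
    le_trans (mul_nonneg (by positivity) (Real.rpow_nonneg hD0 _)) hgrowth₀
  -- step 1 : bound on D^qbar
  have hDq : D ^ qbar ≤ (Fγ x₀ - Fs) * 2 ^ (qbar / 2) / κbar := by
    rw [le_div_iff₀ hκ]
    calc D ^ qbar * κbar
        = (κbar / 2 ^ (qbar / 2) * D ^ qbar) * 2 ^ (qbar / 2) := by
          field_simp
      _ ≤ (Fγ x₀ - Fs) * 2 ^ (qbar / 2) :=
          mul_le_mul_of_nonneg_right hgrowth₀ hc.le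
  -- step 2 : bound on S
  have hA : S ≤ 2 * (Fγ x₀ - Fs) ^ (2 / qbar) / κbar ^ (2 / qbar) := by
    have h1 := Real.rpow_le_rpow (Real.rpow_nonneg hD0 qbar) hDq
      (by positivity : (0:ℝ) ≤ 2 / qbar)
    have hlhs : (D ^ qbar) ^ ((2:ℝ) / qbar) = S := by
      rw [← Real.rpow_mul hD0, mul_div_cancel₀ 2 hqne]
      rw [show ((2:ℝ) = ((2:ℕ):ℝ)) by norm_num, Real.rpow_natCast, hDsq]
    have hrhs : ((Fγ x₀ - Fs) * 2 ^ (qbar / 2) / κbar) ^ ((2:ℝ) / qbar)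
        = 2 * (Fγ x₀ - Fs) ^ (2 / qbar) / κbar ^ (2 / qbar) := by
      rw [Real.div_rpow (mul_nonneg hE0 hc.le) hκ.le,
        Real.mul_rpow hE0 hc.le, ← Real.rpow_mul (by norm_num : (0:ℝ) ≤ 2)]
      rw [show qbar / 2 * (2 / qbar) = 1 by field_simp, Real.rpow_one]
      ring
    rw [hlhs, hrhs] at h1
    exact h1
  -- part (i)
  have hpart1 : Fγ xk - Fs ≤ 1 / (Ak * κbar ^ (2 / qbar)) * (Fγ x₀ - Fs) ^ (2 / qbar) := by
    have h1 : Fγ xk - Fs ≤ S / (2 * Ak) :=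
      le_trans (by linarith) hrate
    calc Fγ xk - Fs ≤ S / (2 * Ak) := h1
      _ ≤ (2 * (Fγ x₀ - Fs) ^ (2 / qbar) / κbar ^ (2 / qbar)) / (2 * Ak) := by
          gcongr
      _ = 1 / (Ak * κbar ^ (2 / qbar)) * (Fγ x₀ - Fs) ^ (2 / qbar) := by
          field_simp
  refine ⟨hpart1, fun hle0 hAk2 α hα hα1 hk => ?_⟩
  have hEF0 : 0 ≤ F x₀ - Fs := sub_nonneg.2 (hmin x₀)
  have hE0EF : Fγ x₀ - Fs ≤ F x₀ - Fs := by linarith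
  have he0 : 0 ≤ (2 - qbar) / qbar := div_nonneg (by linarith) hq0.le
  rcases eq_or_lt_of_le hE0 with h0 | h0
  · -- Fγ x₀ - Fs = 0
    have hz : (Fγ x₀ - Fs) ^ ((2:ℝ) / qbar) = 0 := by
      rw [← h0]; exact Real.zero_rpow (by positivity)
    have := hpart1
    rw [hz, mul_zero] at this
    rw [← h0, mul_zero]
    exact this
  · have hEFpos : 0 < F x₀ - Fs := lt_of_lt_of_le h0 hE0EF
    have hEe : (Fγ x₀ - Fs) ^ ((2 - qbar) / qbar) ≤ (F x₀ - Fs) ^ ((2 - qbar) / qbar) :=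
      Real.rpow_le_rpow hE0 hE0EF he0
    have hsplit : (Fγ x₀ - Fs) ^ ((2:ℝ) / qbar)
        = (Fγ x₀ - Fs) * (Fγ x₀ - Fs) ^ ((2 - qbar) / qbar) := by
      rw [show (2:ℝ) / qbar = 1 + (2 - qbar) / qbar by field_simp; ring,
        Real.rpow_add h0, Real.rpow_one]
    set C := 4 * (N:ℝ) ^ 2 * (F x₀ - Fs) ^ ((2 - qbar) / qbar) / (κbar ^ (2 / qbar) * α)
      with hCdef
    have hNpos : (0:ℝ) < (N:ℝ) := by exact_mod_cast hN
    have hC0 : 0 ≤ C := by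
      apply div_nonneg _ (by positivity)
      exact mul_nonneg (by positivity) (Real.rpow_nonneg hEF0 _)
    have hk2 : C ≤ (k:ℝ) ^ 2 := by
      calc C = Real.sqrt C ^ 2 := (Real.sq_sqrt hC0).symm
        _ ≤ (k:ℝ) ^ 2 := pow_le_pow_left₀ (Real.sqrt_nonneg _) hk 2
    have hAk3 : (F x₀ - Fs) ^ ((2 - qbar) / qbar) / (κbar ^ (2 / qbar) * α) ≤ Ak := by
      have h4N : (0:ℝ) < 4 * (N:ℝ) ^ 2 := by positivity
      calc (F x₀ - Fs) ^ ((2 - qbar) / qbar) / (κbar ^ (2 / qbar) * α)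
          = C / (4 * (N:ℝ) ^ 2) := by rw [hCdef]; field_simp
        _ ≤ (k:ℝ) ^ 2 / (4 * (N:ℝ) ^ 2) := by gcongr
        _ ≤ Ak := hAk2
    have hEFe : (F x₀ - Fs) ^ ((2 - qbar) / qbar) ≤ Ak * (κbar ^ (2 / qbar) * α) :=
      (div_le_iff₀ (by positivity)).1 hAk3
    calc Fγ xk - Fs
        ≤ 1 / (Ak * κbar ^ (2 / qbar)) * (Fγ x₀ - Fs) ^ (2 / qbar) := hpart1
      _ = (Fγ x₀ - Fs) * (Fγ x₀ - Fs) ^ ((2 - qbar) / qbar)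
            / (Ak * κbar ^ (2 / qbar)) := by rw [hsplit]; ring
      _ ≤ (Fγ x₀ - Fs) * (F x₀ - Fs) ^ ((2 - qbar) / qbar)
            / (Ak * κbar ^ (2 / qbar)) := by gcongr
      _ ≤ α * (Fγ x₀ - Fs) := by
          rw [div_le_iff₀ (by positivity)]
          nlinarith [mul_le_mul_of_nonneg_left hEFe h0.le]
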